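/- Let k1, k2, N be positive integers, p a prime, n2 > 1 odd, and n1, n2 >= N. Then sum_{i=0}^{φ(p^N)-1} B^{★,(-k1,-k2)}_{n1+i, n2-1} ≡ 0 (mod p^N). -/

import Mathlib

/-- Stirling numbers of the second kind. -/
def S2 : ℕ → ℕ → ℕ
  | 0, 0 => 1
  | 0, _ + 1 => 0
  | _ + 1, 0 => 0
  | n + 1, m + 1 => S2 n m + (m + 1) * S2 n (m + 1)
/-- Double-indexed poly-Bernoulli number with negative upper indices
`B_{ℓ1,ℓ2}^{(-k1,-k2)}`, via the explicit formula of Theorem 2.1. -/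
def B2negA (l1 l2 k1 k2 : ℕ) : ℤ :=
  ∑ m1 ∈ Finset.range (l1 + l2 + 1), ∑ m2 ∈ Finset.range (l1 + l2 + 1),
    (-1 : ℤ) ^ (m1 + m2 + l1 + l2) * (Nat.factorial m1 : ℤ) * (Nat.factorial m2 : ℤ) *
      ((m1 : ℤ) + 1) ^ k1 * ((m1 : ℤ) + (m2 : ℤ) + 2) ^ k2 *
      ∑ n ∈ Finset.range (l1 + l2 + 1),
        (S2 n m1 : ℤ) * (S2 (l1 + l2 - n) m2 : ℤ) *
          (if l1 ≤ n then (Nat.choose l2 (n - l1) : ℤ) else 0)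

open Finset

lemma S2_succ_succ (n m : ℕ) : S2 (n+1) (m+1) = S2 n m + (m+1) * S2 n (m+1) := rfl

lemma S2_eq_zero : ∀ {n m : ℕ}, n < m → S2 n m = 0 := by
  intro n
  induction n with
  | zero => intro m h; cases m with
    | zero => omega
    | succ m => rfl
  | succ n ih =>
    intro m h
    cases m with
    | zero => omega
    | succ m => rw [S2_succ_succ, ih (by omega), ih (by omega)]; ring

lemma S2_one (i : ℕ) : S2 1 (i+1) = if i = 0 then 1 else 0 := by
  cases i with
  | zero => rfl
  | succ i => rw [S2_succ_succ]; simp [S2_eq_zero]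
  
def Tz (k1 k2 i1 i2 : ℕ) : ℤ :=
  ∑ s ∈ range (k2+1), (Nat.choose k2 s : ℤ) * (S2 (k1+s+1) (i1+1) : ℤ) * (S2 (k2-s+1) (i2+1) : ℤ)

def Tl1 (k1 k2 i1 i2 : ℕ) : ℤ :=
  ∑ s ∈ range (k2+1), (Nat.choose k2 s : ℤ) * (S2 (k1+s+1) i1 : ℤ) * (S2 (k2-s+1) (i2+1) : ℤ)

def Tl2 (k1 k2 i1 i2 : ℕ) : ℤ :=
  ∑ s ∈ range (k2+1), (Nat.choose k2 s : ℤ) * (S2 (k1+s+1) (i1+1) : ℤ) * (S2 (k2-s+1) i2 : ℤ)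

lemma Tl1_zero (k1 k2 i2 : ℕ) : Tl1 k1 k2 0 i2 = 0 := by
  unfold Tl1; apply sum_eq_zero; intro s _
  have : S2 (k1+s+1) 0 = 0 := rfl
  rw [this]; push_cast; ring

lemma Tl1_succ (k1 k2 i1 i2 : ℕ) : Tl1 k1 k2 (i1+1) i2 = Tz k1 k2 i1 i2 := rfl

lemma Tl2_zero (k1 k2 i1 : ℕ) : Tl2 k1 k2 i1 0 = 0 := by
  unfold Tl2; apply sum_eq_zero; intro s _
  have : S2 (k2-s+1) 0 = 0 := rfl
  rw [this]; push_cast; ring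

lemma Tl2_succ (k1 k2 i1 i2 : ℕ) : Tl2 k1 k2 i1 (i2+1) = Tz k1 k2 i1 i2 := rfl

lemma Trec1 (k1 k2 i1 i2 : ℕ) :
    Tz (k1+1) k2 i1 i2 = Tl1 k1 k2 i1 i2 + ((i1:ℤ)+1) * Tz k1 k2 i1 i2 := by
  unfold Tz Tl1
  rw [Finset.mul_sum, ← Finset.sum_add_distrib]
  apply sum_congr rfl; intro s _
  have h : k1+1+s+1 = (k1+s+1)+1 := by omega
  rw [h, S2_succ_succ]; push_cast; ring



lemma Trec2 (k1 k2 i1 i2 : ℕ) :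
    Tz k1 (k2+1) i1 i2 = Tl1 k1 k2 i1 i2 + Tl2 k1 k2 i1 i2 + ((i1:ℤ)+(i2:ℤ)+2) * Tz k1 k2 i1 i2 := by
  have sumA : (∑ s ∈ range (k2+1), (Nat.choose k2 s : ℤ) * (S2 ((k1+s+1)+1) (i1+1) : ℤ) * (S2 (k2-s+1) (i2+1) : ℤ))
      = Tl1 k1 k2 i1 i2 + ((i1:ℤ)+1) * Tz k1 k2 i1 i2 := by
    unfold Tz Tl1
    rw [Finset.mul_sum, ← Finset.sum_add_distrib]
    apply sum_congr rfl; intro s _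
    rw [S2_succ_succ (k1+s+1) i1]; push_cast; ring
  have sumB : (∑ s ∈ range (k2+1), (Nat.choose k2 s : ℤ) * (S2 (k1+s+1) (i1+1) : ℤ) * (S2 ((k2-s+1)+1) (i2+1) : ℤ))
      = Tl2 k1 k2 i1 i2 + ((i2:ℤ)+1) * Tz k1 k2 i1 i2 := by
    unfold Tz Tl2
    rw [Finset.mul_sum, ← Finset.sum_add_distrib]
    apply sum_congr rfl; intro s _
    rw [S2_succ_succ (k2-s+1) i2]; push_cast; ring
  have e1 : ∀ s ∈ range (k2+1),
      (Nat.choose (k2+1) (s+1) : ℤ) * (S2 (k1+(s+1)+1) (i1+1) : ℤ) * (S2 (k2+1-(s+1)+1) (i2+1) : ℤ)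
      = (Nat.choose k2 s : ℤ) * (S2 ((k1+s+1)+1) (i1+1) : ℤ) * (S2 (k2-s+1) (i2+1) : ℤ)
        + (Nat.choose k2 (s+1) : ℤ) * (S2 (k1+(s+1)+1) (i1+1) : ℤ) * (S2 ((k2-(s+1)+1)+1) (i2+1) : ℤ) := by
    intro s hs
    simp only [mem_range] at hs
    have h1 : Nat.choose (k2+1) (s+1) = Nat.choose k2 s + Nat.choose k2 (s+1) := Nat.choose_succ_succ k2 s
    have h2 : k2+1-(s+1) = k2 - s := by omega
    have h3 : k1+(s+1)+1 = (k1+s+1)+1 := by omega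
    rw [h1, h2, h3]
    rcases Nat.lt_or_ge s k2 with h | h
    · have h4 : (k2-(s+1)+1)+1 = k2 - s + 1 := by omega
      rw [h4]; push_cast; ring
    · have hs2 : s = k2 := by omega
      subst hs2
      rw [Nat.choose_succ_self]; push_cast; ring
  have key : Tz k1 (k2+1) i1 i2 =
      (∑ s ∈ range (k2+1), (Nat.choose k2 s : ℤ) * (S2 ((k1+s+1)+1) (i1+1) : ℤ) * (S2 (k2-s+1) (i2+1) : ℤ))
      + (∑ s ∈ range (k2+1), (Nat.choose k2 s : ℤ) * (S2 (k1+s+1) (i1+1) : ℤ) * (S2 ((k2-s+1)+1) (i2+1) : ℤ)) := by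
    calc Tz k1 (k2+1) i1 i2
        = ∑ s ∈ range (k2+1+1), (Nat.choose (k2+1) s : ℤ) * (S2 (k1+s+1) (i1+1) : ℤ) * (S2 (k2+1-s+1) (i2+1) : ℤ) := rfl
      _ = (∑ s ∈ range (k2+1), (Nat.choose (k2+1) (s+1) : ℤ) * (S2 (k1+(s+1)+1) (i1+1) : ℤ) * (S2 (k2+1-(s+1)+1) (i2+1) : ℤ))
          + (Nat.choose (k2+1) 0 : ℤ) * (S2 (k1+0+1) (i1+1) : ℤ) * (S2 (k2+1-0+1) (i2+1) : ℤ) :=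
        Finset.sum_range_succ' _ (k2+1)
      _ = (∑ s ∈ range (k2+1),
            ((Nat.choose k2 s : ℤ) * (S2 ((k1+s+1)+1) (i1+1) : ℤ) * (S2 (k2-s+1) (i2+1) : ℤ)
             + (Nat.choose k2 (s+1) : ℤ) * (S2 (k1+(s+1)+1) (i1+1) : ℤ) * (S2 ((k2-(s+1)+1)+1) (i2+1) : ℤ)))
          + (Nat.choose k2 0 : ℤ) * (S2 (k1+0+1) (i1+1) : ℤ) * (S2 ((k2-0+1)+1) (i2+1) : ℤ) := by
        rw [Finset.sum_congr rfl e1]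
        norm_num
      _ = (∑ s ∈ range (k2+1), (Nat.choose k2 s : ℤ) * (S2 ((k1+s+1)+1) (i1+1) : ℤ) * (S2 (k2-s+1) (i2+1) : ℤ))
          + ((∑ s ∈ range (k2+1), (Nat.choose k2 (s+1) : ℤ) * (S2 (k1+(s+1)+1) (i1+1) : ℤ) * (S2 ((k2-(s+1)+1)+1) (i2+1) : ℤ))
             + (Nat.choose k2 0 : ℤ) * (S2 (k1+0+1) (i1+1) : ℤ) * (S2 ((k2-0+1)+1) (i2+1) : ℤ)) := by
        rw [Finset.sum_add_distrib]; ring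
      _ = (∑ s ∈ range (k2+1), (Nat.choose k2 s : ℤ) * (S2 ((k1+s+1)+1) (i1+1) : ℤ) * (S2 (k2-s+1) (i2+1) : ℤ))
          + (∑ s ∈ range (k2+1+1), (Nat.choose k2 s : ℤ) * (S2 (k1+s+1) (i1+1) : ℤ) * (S2 ((k2-s+1)+1) (i2+1) : ℤ)) := by
        rw [Finset.sum_range_succ' (fun s => (Nat.choose k2 s : ℤ) * (S2 (k1+s+1) (i1+1) : ℤ) * (S2 ((k2-s+1)+1) (i2+1) : ℤ)) (k2+1)]
      _ = (∑ s ∈ range (k2+1), (Nat.choose k2 s : ℤ) * (S2 ((k1+s+1)+1) (i1+1) : ℤ) * (S2 (k2-s+1) (i2+1) : ℤ))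
          + (∑ s ∈ range (k2+1), (Nat.choose k2 s : ℤ) * (S2 (k1+s+1) (i1+1) : ℤ) * (S2 ((k2-s+1)+1) (i2+1) : ℤ)) := by
        rw [Finset.sum_range_succ (fun s => (Nat.choose k2 s : ℤ) * (S2 (k1+s+1) (i1+1) : ℤ) * (S2 ((k2-s+1)+1) (i2+1) : ℤ)) (k2+1)]
        rw [Nat.choose_succ_self]
        push_cast; ring
  rw [key, sumA, sumB]; ring

lemma sum_shift {M : ℕ} (f : ℕ → ℤ) (h0 : f 0 = 0) (h1 : f (M+1) = 0) :
    ∑ i ∈ range (M+1), f i = ∑ i ∈ range (M+1), f (i+1) := by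
  rw [Finset.sum_range_succ' f M, Finset.sum_range_succ (fun i => f (i+1)) M, h0, h1, add_zero]

lemma choose_succ_cast (m i : ℕ) :
    (Nat.choose m (i+1) : ℤ) * ((i:ℤ)+1) = ((m:ℤ) - i) * (Nat.choose m i : ℤ) := by
  rcases le_or_gt i m with h | h
  · have := Nat.choose_succ_right_eq m i
    have hc : ((Nat.choose m (i+1) * (i+1) : ℕ) : ℤ) = ((Nat.choose m i * (m - i) : ℕ) : ℤ) := by
      rw [this]
    push_cast [Nat.cast_sub h] at hc
    linarith
  · rw [Nat.choose_eq_zero_of_lt h, Nat.choose_eq_zero_of_lt (by omega)]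
    push_cast; ring

lemma coeffA (m i : ℕ) :
    (Nat.choose m (i+1) : ℤ) * (Nat.factorial (i+1) : ℤ)
      = ((m:ℤ) - i) * (Nat.choose m i : ℤ) * (Nat.factorial i : ℤ) := by
  rw [Nat.factorial_succ]; push_cast
  have := choose_succ_cast m i
  nlinarith [this]

lemma Tz00 (i1 i2 : ℕ) : Tz 0 0 i1 i2 = (if i1 = 0 then 1 else 0) * (if i2 = 0 then 1 else 0) := by
  unfold Tz
  rw [Finset.sum_range_one]
  have h1 : (0:ℕ)+0+1 = 1 := rfl
  rw [h1, S2_one, S2_one]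
  rcases Nat.eq_zero_or_pos i1 with h | h <;> rcases Nat.eq_zero_or_pos i2 with h' | h' <;>
    simp [h, h', Nat.pos_iff_ne_zero.mp] <;> split_ifs <;> simp_all

lemma shift1 (k1 k2 m1 m2 : ℕ) :
    (∑ i1 ∈ range (m1+1), ∑ i2 ∈ range (m2+1),
      (Nat.choose m1 i1 : ℤ) * (Nat.choose m2 i2 : ℤ) * (Nat.factorial i1 : ℤ) * (Nat.factorial i2 : ℤ) * Tl1 k1 k2 i1 i2)
    = ∑ i1 ∈ range (m1+1), ∑ i2 ∈ range (m2+1),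
      (Nat.choose m1 (i1+1) : ℤ) * (Nat.choose m2 i2 : ℤ) * (Nat.factorial (i1+1) : ℤ) * (Nat.factorial i2 : ℤ) * Tz k1 k2 i1 i2 := by
  rw [sum_shift (fun i1 => ∑ i2 ∈ range (m2+1),
      (Nat.choose m1 i1 : ℤ) * (Nat.choose m2 i2 : ℤ) * (Nat.factorial i1 : ℤ) * (Nat.factorial i2 : ℤ) * Tl1 k1 k2 i1 i2)]
  · apply sum_congr rfl; intro i1 _
    apply sum_congr rfl; intro i2 _
    rw [Tl1_succ]
  · apply sum_eq_zero; intro i2 _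
    rw [Tl1_zero]; ring
  · apply sum_eq_zero; intro i2 _
    rw [Nat.choose_succ_self]; push_cast; ring

lemma shift2 (k1 k2 m1 m2 : ℕ) :
    (∑ i1 ∈ range (m1+1), ∑ i2 ∈ range (m2+1),
      (Nat.choose m1 i1 : ℤ) * (Nat.choose m2 i2 : ℤ) * (Nat.factorial i1 : ℤ) * (Nat.factorial i2 : ℤ) * Tl2 k1 k2 i1 i2)
    = ∑ i1 ∈ range (m1+1), ∑ i2 ∈ range (m2+1),
      (Nat.choose m1 i1 : ℤ) * (Nat.choose m2 (i2+1) : ℤ) * (Nat.factorial i1 : ℤ) * (Nat.factorial (i2+1) : ℤ) * Tz k1 k2 i1 i2 := by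
  apply sum_congr rfl; intro i1 _
  rw [sum_shift (fun i2 =>
      (Nat.choose m1 i1 : ℤ) * (Nat.choose m2 i2 : ℤ) * (Nat.factorial i1 : ℤ) * (Nat.factorial i2 : ℤ) * Tl2 k1 k2 i1 i2)]
  · apply sum_congr rfl; intro i2 _
    rw [Tl2_succ]
  · rw [Tl2_zero]; ring
  · rw [Nat.choose_succ_self]; push_cast; ring

lemma lemE (k2 k1 m1 m2 : ℕ) :
    ((m1:ℤ)+1)^k1 * ((m1:ℤ)+(m2:ℤ)+2)^k2 =
    ∑ i1 ∈ range (m1+1), ∑ i2 ∈ range (m2+1),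
      (Nat.choose m1 i1 : ℤ) * (Nat.choose m2 i2 : ℤ) * (Nat.factorial i1 : ℤ) * (Nat.factorial i2 : ℤ) * Tz k1 k2 i1 i2 := by
  induction k2 with
  | zero =>
    induction k1 with
    | zero =>
      rw [pow_zero, pow_zero, mul_one]
      rw [Finset.sum_eq_single_of_mem 0 (by simp)]
      · rw [Finset.sum_eq_single_of_mem 0 (by simp)]
        · rw [Tz00]; simp
        · intro b _ hb
          rw [Tz00]; simp [hb]
      · intro b _ hb
        apply sum_eq_zero; intro i2 _
        rw [Tz00]; simp [hb]
    | succ k1 ih =>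
      have expand : (∑ i1 ∈ range (m1+1), ∑ i2 ∈ range (m2+1),
          (Nat.choose m1 i1 : ℤ) * (Nat.choose m2 i2 : ℤ) * (Nat.factorial i1 : ℤ) * (Nat.factorial i2 : ℤ) * Tz (k1+1) 0 i1 i2)
          = (∑ i1 ∈ range (m1+1), ∑ i2 ∈ range (m2+1),
              (Nat.choose m1 i1 : ℤ) * (Nat.choose m2 i2 : ℤ) * (Nat.factorial i1 : ℤ) * (Nat.factorial i2 : ℤ) * Tl1 k1 0 i1 i2)
            + (∑ i1 ∈ range (m1+1), ∑ i2 ∈ range (m2+1),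
              ((i1:ℤ)+1) * ((Nat.choose m1 i1 : ℤ) * (Nat.choose m2 i2 : ℤ) * (Nat.factorial i1 : ℤ) * (Nat.factorial i2 : ℤ) * Tz k1 0 i1 i2)) := by
        rw [← Finset.sum_add_distrib]
        apply sum_congr rfl; intro i1 _
        rw [← Finset.sum_add_distrib]
        apply sum_congr rfl; intro i2 _
        rw [Trec1]; ring
      rw [expand, shift1]
      have comb : (∑ i1 ∈ range (m1+1), ∑ i2 ∈ range (m2+1),
          (Nat.choose m1 (i1+1) : ℤ) * (Nat.choose m2 i2 : ℤ) * (Nat.factorial (i1+1) : ℤ) * (Nat.factorial i2 : ℤ) * Tz k1 0 i1 i2)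
          + (∑ i1 ∈ range (m1+1), ∑ i2 ∈ range (m2+1),
              ((i1:ℤ)+1) * ((Nat.choose m1 i1 : ℤ) * (Nat.choose m2 i2 : ℤ) * (Nat.factorial i1 : ℤ) * (Nat.factorial i2 : ℤ) * Tz k1 0 i1 i2))
          = ((m1:ℤ)+1) * ∑ i1 ∈ range (m1+1), ∑ i2 ∈ range (m2+1),
              (Nat.choose m1 i1 : ℤ) * (Nat.choose m2 i2 : ℤ) * (Nat.factorial i1 : ℤ) * (Nat.factorial i2 : ℤ) * Tz k1 0 i1 i2 := by
        rw [Finset.mul_sum, ← Finset.sum_add_distrib]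
        apply sum_congr rfl; intro i1 _
        rw [Finset.mul_sum, ← Finset.sum_add_distrib]
        apply sum_congr rfl; intro i2 _
        linear_combination ((Nat.choose m2 i2 : ℤ) * (Nat.factorial i2 : ℤ) * Tz k1 0 i1 i2) * coeffA m1 i1
      rw [comb, ← ih]
      ring
  | succ k2 ih =>
    have expand : (∑ i1 ∈ range (m1+1), ∑ i2 ∈ range (m2+1),
        (Nat.choose m1 i1 : ℤ) * (Nat.choose m2 i2 : ℤ) * (Nat.factorial i1 : ℤ) * (Nat.factorial i2 : ℤ) * Tz k1 (k2+1) i1 i2)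
        = ((∑ i1 ∈ range (m1+1), ∑ i2 ∈ range (m2+1),
            (Nat.choose m1 i1 : ℤ) * (Nat.choose m2 i2 : ℤ) * (Nat.factorial i1 : ℤ) * (Nat.factorial i2 : ℤ) * Tl1 k1 k2 i1 i2)
          + (∑ i1 ∈ range (m1+1), ∑ i2 ∈ range (m2+1),
            (Nat.choose m1 i1 : ℤ) * (Nat.choose m2 i2 : ℤ) * (Nat.factorial i1 : ℤ) * (Nat.factorial i2 : ℤ) * Tl2 k1 k2 i1 i2))
          + (∑ i1 ∈ range (m1+1), ∑ i2 ∈ range (m2+1),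
            ((i1:ℤ)+(i2:ℤ)+2) * ((Nat.choose m1 i1 : ℤ) * (Nat.choose m2 i2 : ℤ) * (Nat.factorial i1 : ℤ) * (Nat.factorial i2 : ℤ) * Tz k1 k2 i1 i2)) := by
      rw [← Finset.sum_add_distrib, ← Finset.sum_add_distrib]
      apply sum_congr rfl; intro i1 _
      rw [← Finset.sum_add_distrib, ← Finset.sum_add_distrib]
      apply sum_congr rfl; intro i2 _
      rw [Trec2]; ring
    rw [expand, shift1, shift2]
    have comb : ((∑ i1 ∈ range (m1+1), ∑ i2 ∈ range (m2+1),
          (Nat.choose m1 (i1+1) : ℤ) * (Nat.choose m2 i2 : ℤ) * (Nat.factorial (i1+1) : ℤ) * (Nat.factorial i2 : ℤ) * Tz k1 k2 i1 i2)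
        + (∑ i1 ∈ range (m1+1), ∑ i2 ∈ range (m2+1),
          (Nat.choose m1 i1 : ℤ) * (Nat.choose m2 (i2+1) : ℤ) * (Nat.factorial i1 : ℤ) * (Nat.factorial (i2+1) : ℤ) * Tz k1 k2 i1 i2))
        + (∑ i1 ∈ range (m1+1), ∑ i2 ∈ range (m2+1),
          ((i1:ℤ)+(i2:ℤ)+2) * ((Nat.choose m1 i1 : ℤ) * (Nat.choose m2 i2 : ℤ) * (Nat.factorial i1 : ℤ) * (Nat.factorial i2 : ℤ) * Tz k1 k2 i1 i2))
        = ((m1:ℤ)+(m2:ℤ)+2) * ∑ i1 ∈ range (m1+1), ∑ i2 ∈ range (m2+1),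
            (Nat.choose m1 i1 : ℤ) * (Nat.choose m2 i2 : ℤ) * (Nat.factorial i1 : ℤ) * (Nat.factorial i2 : ℤ) * Tz k1 k2 i1 i2 := by
      rw [Finset.mul_sum, ← Finset.sum_add_distrib, ← Finset.sum_add_distrib]
      apply sum_congr rfl; intro i1 _
      rw [Finset.mul_sum, ← Finset.sum_add_distrib, ← Finset.sum_add_distrib]
      apply sum_congr rfl; intro i2 _
      linear_combination ((Nat.choose m2 i2 : ℤ) * (Nat.factorial i2 : ℤ) * Tz k1 k2 i1 i2) * coeffA m1 i1
        + ((Nat.choose m1 i1 : ℤ) * (Nat.factorial i1 : ℤ) * Tz k1 k2 i1 i2) * coeffA m2 i2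
    rw [comb, ← ih]
    ring

lemma S2_succ_zero' (n : ℕ) : S2 (n+1) 0 = 0 := rfl

lemma stirlingInv (a : ℕ) : ∀ i : ℕ,
    (∑ m ∈ range (a+1), (-1:ℤ)^(a+m) * (Nat.factorial m : ℤ) * (Nat.choose m i : ℤ) * (S2 a m : ℤ))
      = (Nat.factorial i : ℤ) * (S2 (a+1) (i+1) : ℤ) := by
  induction a with
  | zero =>
    intro i
    rw [Finset.sum_range_one, S2_one]
    cases i with
    | zero => simp [S2]
    | succ j => simp [Nat.choose_eq_zero_of_lt]
  | succ a ih =>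
    intro i
    have key : (∑ m ∈ range (a+1+1), (-1:ℤ)^(a+1+m) * (Nat.factorial m : ℤ) * (Nat.choose m i : ℤ) * (S2 (a+1) m : ℤ))
        = ∑ m ∈ range (a+1), (-1:ℤ)^(a+m) * (S2 a m : ℤ) *
            ((Nat.factorial (m+1) : ℤ) * (Nat.choose (m+1) i : ℤ) - (Nat.factorial m : ℤ) * (m:ℤ) * (Nat.choose m i : ℤ)) := by
      rw [Finset.sum_range_succ' (fun m => (-1:ℤ)^(a+1+m) * (Nat.factorial m : ℤ) * (Nat.choose m i : ℤ) * (S2 (a+1) m : ℤ)) (a+1)]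
      have hF0 : (-1:ℤ)^(a+1+0) * (Nat.factorial 0 : ℤ) * (Nat.choose 0 i : ℤ) * (S2 (a+1) 0 : ℤ) = 0 := by
        rw [S2_succ_zero']; push_cast; ring
      rw [hF0, add_zero]
      have step1 : ∀ m ∈ range (a+1),
          (-1:ℤ)^(a+1+(m+1)) * (Nat.factorial (m+1) : ℤ) * (Nat.choose (m+1) i : ℤ) * (S2 (a+1) (m+1) : ℤ)
          = (-1:ℤ)^(a+m) * (S2 a m : ℤ) * ((Nat.factorial (m+1) : ℤ) * (Nat.choose (m+1) i : ℤ))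
            + (-(-1:ℤ)^(a+(m+1)) * (Nat.factorial (m+1) : ℤ) * ((m+1 : ℕ) : ℤ) * (Nat.choose (m+1) i : ℤ) * (S2 a (m+1) : ℤ)) := by
        intro m _
        rw [S2_succ_succ]
        have he : a+1+(m+1) = (a+m)+2 := by omega
        rw [he]
        push_cast; ring
      rw [Finset.sum_congr rfl step1, Finset.sum_add_distrib]
      have step2 : (∑ m ∈ range (a+1),
          (-(-1:ℤ)^(a+(m+1)) * (Nat.factorial (m+1) : ℤ) * ((m+1 : ℕ) : ℤ) * (Nat.choose (m+1) i : ℤ) * (S2 a (m+1) : ℤ)))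
          = ∑ m ∈ range (a+1), (-(-1:ℤ)^(a+m) * (Nat.factorial m : ℤ) * ((m : ℕ) : ℤ) * (Nat.choose m i : ℤ) * (S2 a m : ℤ)) := by
        rw [← sum_shift (fun m => (-(-1:ℤ)^(a+m) * (Nat.factorial m : ℤ) * ((m : ℕ) : ℤ) * (Nat.choose m i : ℤ) * (S2 a m : ℤ)))]
        · push_cast; ring
        · rw [S2_eq_zero (by omega : a < a+1)]; push_cast; ring
      rw [step2, ← Finset.sum_add_distrib]
      apply sum_congr rfl; intro m _
      push_cast; ring
    rw [key]
    cases i with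
    | zero =>
      have coeff : ∀ m ∈ range (a+1),
          (-1:ℤ)^(a+m) * (S2 a m : ℤ) *
            ((Nat.factorial (m+1) : ℤ) * (Nat.choose (m+1) 0 : ℤ) - (Nat.factorial m : ℤ) * (m:ℤ) * (Nat.choose m 0 : ℤ))
          = (-1:ℤ)^(a+m) * (Nat.factorial m : ℤ) * (Nat.choose m 0 : ℤ) * (S2 a m : ℤ) := by
        intro m _
        rw [Nat.choose_zero_right, Nat.choose_zero_right, Nat.factorial_succ]
        push_cast; ring
      rw [Finset.sum_congr rfl coeff, ih 0, S2_succ_succ (a+1) 0, S2_succ_zero']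
      push_cast; ring
    | succ j =>
      have coeff : ∀ m ∈ range (a+1),
          (-1:ℤ)^(a+m) * (S2 a m : ℤ) *
            ((Nat.factorial (m+1) : ℤ) * (Nat.choose (m+1) (j+1) : ℤ) - (Nat.factorial m : ℤ) * (m:ℤ) * (Nat.choose m (j+1) : ℤ))
          = ((j:ℤ)+1) * ((-1:ℤ)^(a+m) * (Nat.factorial m : ℤ) * (Nat.choose m j : ℤ) * (S2 a m : ℤ))
            + ((j:ℤ)+2) * ((-1:ℤ)^(a+m) * (Nat.factorial m : ℤ) * (Nat.choose m (j+1) : ℤ) * (S2 a m : ℤ)) := by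
        intro m _
        have hp : (Nat.choose (m+1) (j+1) : ℤ) = (Nat.choose m j : ℤ) + (Nat.choose m (j+1) : ℤ) := by
          rw [Nat.choose_succ_succ]; push_cast; ring
        have hc := choose_succ_cast m j
        rw [Nat.factorial_succ]
        push_cast [hp]
        linear_combination (-((-1:ℤ)^(a+m) * (S2 a m : ℤ) * (Nat.factorial m : ℤ))) * hc
      rw [Finset.sum_congr rfl coeff, Finset.sum_add_distrib, ← Finset.mul_sum, ← Finset.mul_sum, ih j, ih (j+1),
        S2_succ_succ (a+1) (j+1)]
      push_cast [Nat.factorial_succ]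
      ring

lemma stirlingInv' (a i M : ℕ) (h : a ≤ M) :
    (∑ m ∈ range (M+1), (-1:ℤ)^(a+m) * (Nat.factorial m : ℤ) * (Nat.choose m i : ℤ) * (S2 a m : ℤ))
      = (Nat.factorial i : ℤ) * (S2 (a+1) (i+1) : ℤ) := by
  rw [← stirlingInv a i]
  apply (Finset.sum_subset (by intro x hx; simp only [mem_range] at *; omega) ?_).symm
  intro x hx hx'
  simp only [mem_range] at hx hx'
  rw [S2_eq_zero (by omega : a < x)]
  push_cast; ring

lemma lemE' (k1 k2 m1 m2 M : ℕ) (h1 : m1 ≤ M) (h2 : m2 ≤ M) :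
    ((m1:ℤ)+1)^k1 * ((m1:ℤ)+(m2:ℤ)+2)^k2 =
    ∑ i1 ∈ range (M+1), ∑ i2 ∈ range (M+1),
      (Nat.choose m1 i1 : ℤ) * (Nat.choose m2 i2 : ℤ) * (Nat.factorial i1 : ℤ) * (Nat.factorial i2 : ℤ) * Tz k1 k2 i1 i2 := by
  rw [lemE]
  have inner : ∀ i1 : ℕ,
      (∑ i2 ∈ range (m2+1), (Nat.choose m1 i1 : ℤ) * (Nat.choose m2 i2 : ℤ) * (Nat.factorial i1 : ℤ) * (Nat.factorial i2 : ℤ) * Tz k1 k2 i1 i2)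
      = ∑ i2 ∈ range (M+1), (Nat.choose m1 i1 : ℤ) * (Nat.choose m2 i2 : ℤ) * (Nat.factorial i1 : ℤ) * (Nat.factorial i2 : ℤ) * Tz k1 k2 i1 i2 := by
    intro i1
    apply Finset.sum_subset (by intro x hx; simp only [mem_range] at *; omega)
    intro x hx hx'
    simp only [mem_range] at hx hx'
    rw [Nat.choose_eq_zero_of_lt (by omega : m2 < x)]
    push_cast; ring
  rw [Finset.sum_congr rfl (fun i1 _ => inner i1)]
  apply Finset.sum_subset (by intro x hx; simp only [mem_range] at *; omega)
  intro x hx hx'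
  simp only [mem_range] at hx hx'
  apply sum_eq_zero; intro i2 _
  rw [Nat.choose_eq_zero_of_lt (by omega : m1 < x)]
  push_cast; ring

lemma sum4_swap (n : ℕ) (g : ℕ → ℕ → ℕ → ℕ → ℤ) :
    (∑ x1 ∈ range n, ∑ x2 ∈ range n, ∑ x3 ∈ range n, ∑ x4 ∈ range n, g x1 x2 x3 x4)
    = ∑ x3 ∈ range n, ∑ x4 ∈ range n, ∑ x1 ∈ range n, ∑ x2 ∈ range n, g x1 x2 x3 x4 := by
  calc (∑ x1 ∈ range n, ∑ x2 ∈ range n, ∑ x3 ∈ range n, ∑ x4 ∈ range n, g x1 x2 x3 x4)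
      = ∑ x1 ∈ range n, ∑ x3 ∈ range n, ∑ x2 ∈ range n, ∑ x4 ∈ range n, g x1 x2 x3 x4 :=
        Finset.sum_congr rfl (fun x1 _ => Finset.sum_comm)
    _ = ∑ x3 ∈ range n, ∑ x1 ∈ range n, ∑ x2 ∈ range n, ∑ x4 ∈ range n, g x1 x2 x3 x4 := Finset.sum_comm
    _ = ∑ x3 ∈ range n, ∑ x1 ∈ range n, ∑ x4 ∈ range n, ∑ x2 ∈ range n, g x1 x2 x3 x4 :=
        Finset.sum_congr rfl (fun x3 _ => Finset.sum_congr rfl (fun x1 _ => Finset.sum_comm))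
    _ = ∑ x3 ∈ range n, ∑ x4 ∈ range n, ∑ x1 ∈ range n, ∑ x2 ∈ range n, g x1 x2 x3 x4 :=
        Finset.sum_congr rfl (fun x3 _ => Finset.sum_comm)

lemma core (k1 k2 a b M : ℕ) (ha : a ≤ M) (hb : b ≤ M) :
    (∑ m1 ∈ range (M+1), ∑ m2 ∈ range (M+1),
      (-1:ℤ)^(m1+m2+a+b) * (Nat.factorial m1 : ℤ) * (Nat.factorial m2 : ℤ) *
        ((m1:ℤ)+1)^k1 * ((m1:ℤ)+(m2:ℤ)+2)^k2 * (S2 a m1 : ℤ) * (S2 b m2 : ℤ))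
    = ∑ i1 ∈ range (M+1), ∑ i2 ∈ range (M+1),
      (Nat.factorial i1 : ℤ) * (Nat.factorial i1 : ℤ) * (Nat.factorial i2 : ℤ) * (Nat.factorial i2 : ℤ) *
        (S2 (a+1) (i1+1) : ℤ) * (S2 (b+1) (i2+1) : ℤ) * Tz k1 k2 i1 i2 := by
  have step1 : (∑ m1 ∈ range (M+1), ∑ m2 ∈ range (M+1),
      (-1:ℤ)^(m1+m2+a+b) * (Nat.factorial m1 : ℤ) * (Nat.factorial m2 : ℤ) *
        ((m1:ℤ)+1)^k1 * ((m1:ℤ)+(m2:ℤ)+2)^k2 * (S2 a m1 : ℤ) * (S2 b m2 : ℤ))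
      = ∑ m1 ∈ range (M+1), ∑ m2 ∈ range (M+1), ∑ i1 ∈ range (M+1), ∑ i2 ∈ range (M+1),
        ((-1:ℤ)^(a+m1) * (Nat.factorial m1 : ℤ) * (Nat.choose m1 i1 : ℤ) * (S2 a m1 : ℤ))
        * ((-1:ℤ)^(b+m2) * (Nat.factorial m2 : ℤ) * (Nat.choose m2 i2 : ℤ) * (S2 b m2 : ℤ))
        * ((Nat.factorial i1 : ℤ) * (Nat.factorial i2 : ℤ) * Tz k1 k2 i1 i2) := by
    apply sum_congr rfl; intro m1 hm1
    apply sum_congr rfl; intro m2 hm2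
    simp only [mem_range] at hm1 hm2
    calc (-1:ℤ)^(m1+m2+a+b) * (Nat.factorial m1 : ℤ) * (Nat.factorial m2 : ℤ) *
        ((m1:ℤ)+1)^k1 * ((m1:ℤ)+(m2:ℤ)+2)^k2 * (S2 a m1 : ℤ) * (S2 b m2 : ℤ)
        = ((-1:ℤ)^(m1+m2+a+b) * (Nat.factorial m1 : ℤ) * (Nat.factorial m2 : ℤ) * (S2 a m1 : ℤ) * (S2 b m2 : ℤ))
          * (((m1:ℤ)+1)^k1 * ((m1:ℤ)+(m2:ℤ)+2)^k2) := by ring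
      _ = ((-1:ℤ)^(m1+m2+a+b) * (Nat.factorial m1 : ℤ) * (Nat.factorial m2 : ℤ) * (S2 a m1 : ℤ) * (S2 b m2 : ℤ))
          * (∑ i1 ∈ range (M+1), ∑ i2 ∈ range (M+1),
            (Nat.choose m1 i1 : ℤ) * (Nat.choose m2 i2 : ℤ) * (Nat.factorial i1 : ℤ) * (Nat.factorial i2 : ℤ) * Tz k1 k2 i1 i2) := by
        rw [← lemE' k1 k2 m1 m2 M (by omega) (by omega)]
      _ = ∑ i1 ∈ range (M+1), ∑ i2 ∈ range (M+1),
            ((-1:ℤ)^(a+m1) * (Nat.factorial m1 : ℤ) * (Nat.choose m1 i1 : ℤ) * (S2 a m1 : ℤ))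
            * ((-1:ℤ)^(b+m2) * (Nat.factorial m2 : ℤ) * (Nat.choose m2 i2 : ℤ) * (S2 b m2 : ℤ))
            * ((Nat.factorial i1 : ℤ) * (Nat.factorial i2 : ℤ) * Tz k1 k2 i1 i2) := by
        rw [Finset.mul_sum]
        apply sum_congr rfl; intro i1 _
        rw [Finset.mul_sum]
        apply sum_congr rfl; intro i2 _
        have hsgn : (-1:ℤ)^(m1+m2+a+b) = (-1:ℤ)^(a+m1) * (-1:ℤ)^(b+m2) := by
          rw [← pow_add]
          congr 1
          omega
        rw [hsgn]; ring
  rw [step1, sum4_swap]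
  apply sum_congr rfl; intro i1 _
  apply sum_congr rfl; intro i2 _
  have factored : (Nat.factorial i1 : ℤ) * (Nat.factorial i1 : ℤ) * (Nat.factorial i2 : ℤ) * (Nat.factorial i2 : ℤ) *
        (S2 (a+1) (i1+1) : ℤ) * (S2 (b+1) (i2+1) : ℤ) * Tz k1 k2 i1 i2
      = (∑ m1 ∈ range (M+1), (-1:ℤ)^(a+m1) * (Nat.factorial m1 : ℤ) * (Nat.choose m1 i1 : ℤ) * (S2 a m1 : ℤ))
        * (∑ m2 ∈ range (M+1), (-1:ℤ)^(b+m2) * (Nat.factorial m2 : ℤ) * (Nat.choose m2 i2 : ℤ) * (S2 b m2 : ℤ))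
        * ((Nat.factorial i1 : ℤ) * (Nat.factorial i2 : ℤ) * Tz k1 k2 i1 i2) := by
    rw [stirlingInv' a i1 M ha, stirlingInv' b i2 M hb]; ring
  rw [factored, Finset.sum_mul_sum, Finset.sum_mul]
  apply sum_congr rfl; intro m1 _
  rw [Finset.sum_mul]

lemma Tz_zero_left (l1 l2 i1 i2 : ℕ) (h : l1 + l2 < i1) : Tz l1 l2 i1 i2 = 0 := by
  unfold Tz
  apply sum_eq_zero; intro s hs
  simp only [mem_range] at hs
  rw [S2_eq_zero (by omega : l1+s+1 < i1+1)]
  push_cast; ring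

lemma Tz_zero_right (l1 l2 i1 i2 : ℕ) (h : l2 < i2) : Tz l1 l2 i1 i2 = 0 := by
  unfold Tz
  apply sum_eq_zero; intro s hs
  simp only [mem_range] at hs
  rw [S2_eq_zero (by omega : l2-s+1 < i2+1)]
  push_cast; ring

lemma inner_reindex (l1 l2 m1 m2 : ℕ) :
    (∑ n ∈ range (l1+l2+1), (S2 n m1 : ℤ) * (S2 (l1+l2-n) m2 : ℤ) * (if l1 ≤ n then (Nat.choose l2 (n-l1) : ℤ) else 0))
    = ∑ t ∈ range (l2+1), (Nat.choose l2 t : ℤ) * (S2 (l1+t) m1 : ℤ) * (S2 (l2-t) m2 : ℤ) := by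
  rw [range_eq_Ico, ← Finset.sum_Ico_consecutive _ (Nat.zero_le l1) (by omega : l1 ≤ l1+l2+1)]
  have h1 : (∑ n ∈ Finset.Ico 0 l1, (S2 n m1 : ℤ) * (S2 (l1+l2-n) m2 : ℤ) * (if l1 ≤ n then (Nat.choose l2 (n-l1) : ℤ) else 0)) = 0 := by
    apply sum_eq_zero; intro n hn
    simp only [Finset.mem_Ico] at hn
    rw [if_neg (by omega)]
    ring
  rw [h1, zero_add, Finset.sum_Ico_eq_sum_range]
  have h2 : l1 + l2 + 1 - l1 = l2 + 1 := by omega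
  rw [h2]
  apply sum_congr rfl; intro t ht
  simp only [mem_range] at ht
  rw [if_pos (by omega : l1 ≤ l1 + t)]
  have h3 : l1 + l2 - (l1 + t) = l2 - t := by omega
  have h4 : l1 + t - l1 = t := by omega
  rw [h3, h4]
  ring

lemma symForm (l1 l2 k1 k2 : ℕ) :
    B2negA l1 l2 k1 k2 = ∑ i1 ∈ range (l1+l2+1), ∑ i2 ∈ range (l1+l2+1),
      (Nat.factorial i1 : ℤ) * (Nat.factorial i1 : ℤ) * (Nat.factorial i2 : ℤ) * (Nat.factorial i2 : ℤ) *
        Tz l1 l2 i1 i2 * Tz k1 k2 i1 i2 := by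
  set L := l1 + l2 with hL
  have stepA : B2negA l1 l2 k1 k2 = ∑ t ∈ range (l2+1), (Nat.choose l2 t : ℤ) *
      (∑ m1 ∈ range (L+1), ∑ m2 ∈ range (L+1),
        (-1:ℤ)^(m1+m2+(l1+t)+(l2-t)) * (Nat.factorial m1 : ℤ) * (Nat.factorial m2 : ℤ) *
          ((m1:ℤ)+1)^k1 * ((m1:ℤ)+(m2:ℤ)+2)^k2 * (S2 (l1+t) m1 : ℤ) * (S2 (l2-t) m2 : ℤ)) := by
    unfold B2negA
    calc (∑ m1 ∈ range (l1+l2+1), ∑ m2 ∈ range (l1+l2+1),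
        (-1:ℤ)^(m1+m2+l1+l2) * (Nat.factorial m1 : ℤ) * (Nat.factorial m2 : ℤ) *
          ((m1:ℤ)+1)^k1 * ((m1:ℤ)+(m2:ℤ)+2)^k2 *
          ∑ n ∈ range (l1+l2+1), (S2 n m1 : ℤ) * (S2 (l1+l2-n) m2 : ℤ) * (if l1 ≤ n then (Nat.choose l2 (n-l1) : ℤ) else 0))
        = ∑ m1 ∈ range (L+1), ∑ m2 ∈ range (L+1), ∑ t ∈ range (l2+1),
            (Nat.choose l2 t : ℤ) * ((-1:ℤ)^(m1+m2+(l1+t)+(l2-t)) * (Nat.factorial m1 : ℤ) * (Nat.factorial m2 : ℤ) *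
              ((m1:ℤ)+1)^k1 * ((m1:ℤ)+(m2:ℤ)+2)^k2 * (S2 (l1+t) m1 : ℤ) * (S2 (l2-t) m2 : ℤ)) := by
          apply sum_congr rfl; intro m1 _
          apply sum_congr rfl; intro m2 _
          rw [inner_reindex, Finset.mul_sum]
          apply sum_congr rfl; intro t ht
          simp only [mem_range] at ht
          have hsgn : m1+m2+(l1+t)+(l2-t) = m1+m2+l1+l2 := by omega
          rw [hsgn]; ring
      _ = ∑ t ∈ range (l2+1), ∑ m1 ∈ range (L+1), ∑ m2 ∈ range (L+1),
            (Nat.choose l2 t : ℤ) * ((-1:ℤ)^(m1+m2+(l1+t)+(l2-t)) * (Nat.factorial m1 : ℤ) * (Nat.factorial m2 : ℤ) *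
              ((m1:ℤ)+1)^k1 * ((m1:ℤ)+(m2:ℤ)+2)^k2 * (S2 (l1+t) m1 : ℤ) * (S2 (l2-t) m2 : ℤ)) := by
        exact (Finset.sum_congr rfl fun m1 _ => Finset.sum_comm).trans Finset.sum_comm
      _ = ∑ t ∈ range (l2+1), (Nat.choose l2 t : ℤ) *
            (∑ m1 ∈ range (L+1), ∑ m2 ∈ range (L+1),
              (-1:ℤ)^(m1+m2+(l1+t)+(l2-t)) * (Nat.factorial m1 : ℤ) * (Nat.factorial m2 : ℤ) *
                ((m1:ℤ)+1)^k1 * ((m1:ℤ)+(m2:ℤ)+2)^k2 * (S2 (l1+t) m1 : ℤ) * (S2 (l2-t) m2 : ℤ)) := by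
        apply sum_congr rfl; intro t _
        rw [Finset.mul_sum]
        apply sum_congr rfl; intro m1 _
        rw [Finset.mul_sum]
  rw [stepA]
  have stepB : ∀ t ∈ range (l2+1),
      (Nat.choose l2 t : ℤ) * (∑ m1 ∈ range (L+1), ∑ m2 ∈ range (L+1),
        (-1:ℤ)^(m1+m2+(l1+t)+(l2-t)) * (Nat.factorial m1 : ℤ) * (Nat.factorial m2 : ℤ) *
          ((m1:ℤ)+1)^k1 * ((m1:ℤ)+(m2:ℤ)+2)^k2 * (S2 (l1+t) m1 : ℤ) * (S2 (l2-t) m2 : ℤ))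
      = (Nat.choose l2 t : ℤ) * (∑ i1 ∈ range (L+1), ∑ i2 ∈ range (L+1),
          (Nat.factorial i1 : ℤ) * (Nat.factorial i1 : ℤ) * (Nat.factorial i2 : ℤ) * (Nat.factorial i2 : ℤ) *
            (S2 ((l1+t)+1) (i1+1) : ℤ) * (S2 ((l2-t)+1) (i2+1) : ℤ) * Tz k1 k2 i1 i2) := by
    intro t ht
    simp only [mem_range] at ht
    rw [core k1 k2 (l1+t) (l2-t) L (by omega) (by omega)]
  rw [Finset.sum_congr rfl stepB]
  calc (∑ t ∈ range (l2+1), (Nat.choose l2 t : ℤ) * (∑ i1 ∈ range (L+1), ∑ i2 ∈ range (L+1),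
          (Nat.factorial i1 : ℤ) * (Nat.factorial i1 : ℤ) * (Nat.factorial i2 : ℤ) * (Nat.factorial i2 : ℤ) *
            (S2 ((l1+t)+1) (i1+1) : ℤ) * (S2 ((l2-t)+1) (i2+1) : ℤ) * Tz k1 k2 i1 i2))
      = ∑ t ∈ range (l2+1), ∑ i1 ∈ range (L+1), ∑ i2 ∈ range (L+1),
          (Nat.choose l2 t : ℤ) * ((Nat.factorial i1 : ℤ) * (Nat.factorial i1 : ℤ) * (Nat.factorial i2 : ℤ) * (Nat.factorial i2 : ℤ) *
            (S2 ((l1+t)+1) (i1+1) : ℤ) * (S2 ((l2-t)+1) (i2+1) : ℤ) * Tz k1 k2 i1 i2) := by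
        apply sum_congr rfl; intro t _
        rw [Finset.mul_sum]
        apply sum_congr rfl; intro i1 _
        rw [Finset.mul_sum]
    _ = ∑ i1 ∈ range (L+1), ∑ i2 ∈ range (L+1), ∑ t ∈ range (l2+1),
          (Nat.choose l2 t : ℤ) * ((Nat.factorial i1 : ℤ) * (Nat.factorial i1 : ℤ) * (Nat.factorial i2 : ℤ) * (Nat.factorial i2 : ℤ) *
            (S2 ((l1+t)+1) (i1+1) : ℤ) * (S2 ((l2-t)+1) (i2+1) : ℤ) * Tz k1 k2 i1 i2) := by
        exact Finset.sum_comm.trans (Finset.sum_congr rfl fun i1 _ => Finset.sum_comm)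
    _ = ∑ i1 ∈ range (L+1), ∑ i2 ∈ range (L+1),
          (Nat.factorial i1 : ℤ) * (Nat.factorial i1 : ℤ) * (Nat.factorial i2 : ℤ) * (Nat.factorial i2 : ℤ) *
            Tz l1 l2 i1 i2 * Tz k1 k2 i1 i2 := by
        apply sum_congr rfl; intro i1 _
        apply sum_congr rfl; intro i2 _
        have hTz : (∑ t ∈ range (l2+1), (Nat.choose l2 t : ℤ) * (S2 (l1+t+1) (i1+1) : ℤ) * (S2 (l2-t+1) (i2+1) : ℤ)) = Tz l1 l2 i1 i2 := rfl
        have expand : (Nat.factorial i1 : ℤ) * (Nat.factorial i1 : ℤ) * (Nat.factorial i2 : ℤ) * (Nat.factorial i2 : ℤ) *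
              Tz l1 l2 i1 i2 * Tz k1 k2 i1 i2
            = ∑ t ∈ range (l2+1), ((Nat.choose l2 t : ℤ) * (S2 (l1+t+1) (i1+1) : ℤ) * (S2 (l2-t+1) (i2+1) : ℤ)) *
                ((Nat.factorial i1 : ℤ) * (Nat.factorial i1 : ℤ) * (Nat.factorial i2 : ℤ) * (Nat.factorial i2 : ℤ) * Tz k1 k2 i1 i2) := by
          calc (Nat.factorial i1 : ℤ) * (Nat.factorial i1 : ℤ) * (Nat.factorial i2 : ℤ) * (Nat.factorial i2 : ℤ) *
              Tz l1 l2 i1 i2 * Tz k1 k2 i1 i2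
              = Tz l1 l2 i1 i2 * ((Nat.factorial i1 : ℤ) * (Nat.factorial i1 : ℤ) * (Nat.factorial i2 : ℤ) * (Nat.factorial i2 : ℤ) * Tz k1 k2 i1 i2) := by
                ring
            _ = ∑ t ∈ range (l2+1), ((Nat.choose l2 t : ℤ) * (S2 (l1+t+1) (i1+1) : ℤ) * (S2 (l2-t+1) (i2+1) : ℤ)) *
                ((Nat.factorial i1 : ℤ) * (Nat.factorial i1 : ℤ) * (Nat.factorial i2 : ℤ) * (Nat.factorial i2 : ℤ) * Tz k1 k2 i1 i2) := by
                rw [← hTz, Finset.sum_mul]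
        rw [expand]
        apply sum_congr rfl; intro t _
        ring

lemma symFormM (l1 l2 k1 k2 M : ℕ) (h : l1 + l2 ≤ M) :
    B2negA l1 l2 k1 k2 = ∑ i1 ∈ range (M+1), ∑ i2 ∈ range (M+1),
      (Nat.factorial i1 : ℤ) * (Nat.factorial i1 : ℤ) * (Nat.factorial i2 : ℤ) * (Nat.factorial i2 : ℤ) *
        Tz l1 l2 i1 i2 * Tz k1 k2 i1 i2 := by
  rw [symForm]
  have inner : ∀ i1 : ℕ,
      (∑ i2 ∈ range (l1+l2+1), (Nat.factorial i1 : ℤ) * (Nat.factorial i1 : ℤ) * (Nat.factorial i2 : ℤ) * (Nat.factorial i2 : ℤ) *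
        Tz l1 l2 i1 i2 * Tz k1 k2 i1 i2)
      = ∑ i2 ∈ range (M+1), (Nat.factorial i1 : ℤ) * (Nat.factorial i1 : ℤ) * (Nat.factorial i2 : ℤ) * (Nat.factorial i2 : ℤ) *
        Tz l1 l2 i1 i2 * Tz k1 k2 i1 i2 := by
    intro i1
    apply Finset.sum_subset (by intro x hx; simp only [mem_range] at *; omega)
    intro x hx hx'
    simp only [mem_range] at hx hx'
    rw [Tz_zero_right l1 l2 i1 x (by omega)]
    ring
  rw [Finset.sum_congr rfl (fun i1 _ => inner i1)]
  apply Finset.sum_subset (by intro x hx; simp only [mem_range] at *; omega)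
  intro x hx hx'
  simp only [mem_range] at hx hx'
  apply sum_eq_zero; intro i2 _
  rw [Tz_zero_left l1 l2 x i2 (by omega)]
  ring

lemma B2negA_symm (l1 l2 k1 k2 : ℕ) : B2negA l1 l2 k1 k2 = B2negA k1 k2 l1 l2 := by
  rw [symFormM l1 l2 k1 k2 (l1+l2+k1+k2) (by omega), symFormM k1 k2 l1 l2 (l1+l2+k1+k2) (by omega)]
  apply sum_congr rfl; intro i1 _
  apply sum_congr rfl; intro i2 _
  ring

lemma W_zero (k1 k2 : ℕ) (hk1 : 0 < k1) (m2 : ℕ) :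
    (∑ n ∈ range (k1+k2+1), (S2 n 0 : ℤ) * (S2 (k1+k2-n) m2 : ℤ) *
      (if k1 ≤ n then (Nat.choose k2 (n-k1) : ℤ) else 0)) = 0 := by
  apply sum_eq_zero; intro n _
  cases n with
  | zero => rw [if_neg (by omega)]; ring
  | succ n => rw [S2_succ_zero']; push_cast; ring

lemma keyDvd (p N : ℕ) (hp : p.Prime) (m1 n : ℕ) (hm : 0 < m1) (hn : N ≤ n) :
    ((p:ℤ))^N ∣ (Nat.factorial m1 : ℤ) * ∑ i ∈ range (Nat.totient (p^N)), ((m1:ℤ)+1)^(n+i) := by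
  obtain ⟨m, rfl⟩ : ∃ m, m1 = m + 1 := ⟨m1 - 1, by omega⟩
  push_cast
  set t := Nat.totient (p^N) with ht
  set x : ℤ := ((m:ℤ)+1)+1 with hx
  have hsplit : (∑ i ∈ range t, x^(n+i)) = x^n * ∑ i ∈ range t, x^i := by
    rw [Finset.mul_sum]
    apply sum_congr rfl; intro i _
    rw [pow_add]
  have hgeom : (∑ i ∈ range t, x^i) * (x - 1) = x^t - 1 := geom_sum_mul x t
  have hfac : (Nat.factorial (m+1) : ℤ) * ∑ i ∈ range t, x^(n+i)
      = (Nat.factorial m : ℤ) * x^n * (x^t - 1) := by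
    rw [hsplit, ← hgeom]
    push_cast [Nat.factorial_succ]
    ring
  rw [hfac]
  rcases em (p ∣ m + 2) with h | h
  · have hd : (p:ℤ) ∣ x := by
      have h' : ((p:ℕ):ℤ) ∣ ((m+2 : ℕ):ℤ) := Int.natCast_dvd_natCast.mpr h
      push_cast at h'
      rw [hx, show ((m:ℤ)+1)+1 = ((m:ℤ)+2) by ring]
      exact h'
    have h1 : (p:ℤ)^N ∣ x^n := dvd_trans (pow_dvd_pow_of_dvd hd N) (pow_dvd_pow x hn)
    exact ((h1.mul_left _).mul_right _)
  · have hcop : Nat.Coprime (m+2) (p^N) :=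
      (Nat.Coprime.pow_right N (((Nat.Prime.coprime_iff_not_dvd hp).mpr h).symm))
    have heuler : (m+2) ^ t ≡ 1 [MOD p^N] := by
      rw [ht]; exact Nat.ModEq.pow_totient hcop
    have hdvd : ((p^N : ℕ) : ℤ) ∣ (1:ℤ) - ((m+2:ℕ):ℤ)^t := by
      have h' := heuler.dvd
      push_cast at h' ⊢
      convert h' using 2
    have hdvd2 : (p:ℤ)^N ∣ x^t - 1 := by
      have h2 : ((p:ℤ))^N ∣ (1:ℤ) - x^t := by
        have : ((m+2:ℕ):ℤ) = x := by rw [hx]; push_cast; ring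
        rw [← this]
        exact_mod_cast hdvd
      have := h2.neg_right
      simpa using this
    exact hdvd2.mul_left _

/-- Vanishing of totient-length sums of star double-indexed poly-Bernoulli
numbers with odd second index. -/
theorem starDoublePolyBernoulli_sum_vanish (k1 k2 N : ℕ)
    (hk1 : 0 < k1) (hk2 : 0 < k2) (hN : 0 < N) (p : ℕ) (hp : p.Prime)
    (Bstar : ℕ → ℕ → ℤ)
    (hBstar : ∀ a b : ℕ, Odd b → 1 < b → Bstar a (b - 1) = B2negA a (b - 1) k1 k2)
    (n1 n2 : ℕ) (hodd : Odd n2) (hn2' : 1 < n2) (hn1 : N ≤ n1) (hn2 : N ≤ n2) :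
    (∑ i ∈ Finset.range (Nat.totient (p ^ N)), Bstar (n1 + i) (n2 - 1)) ≡ 0
      [ZMOD (p : ℤ) ^ N] := by
  apply Int.modEq_zero_iff_dvd.mpr
  have hrw : ∀ i ∈ range (Nat.totient (p ^ N)), Bstar (n1 + i) (n2 - 1)
      = ∑ m1 ∈ range (k1+k2+1), ∑ m2 ∈ range (k1+k2+1),
        (-1 : ℤ) ^ (m1 + m2 + k1 + k2) * (Nat.factorial m1 : ℤ) * (Nat.factorial m2 : ℤ) *
          ((m1 : ℤ) + 1) ^ (n1 + i) * ((m1 : ℤ) + (m2 : ℤ) + 2) ^ (n2 - 1) *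
          ∑ n ∈ range (k1 + k2 + 1),
            (S2 n m1 : ℤ) * (S2 (k1 + k2 - n) m2 : ℤ) *
              (if k1 ≤ n then (Nat.choose k2 (n - k1) : ℤ) else 0) := by
    intro i _
    rw [hBstar (n1+i) n2 hodd hn2', B2negA_symm]
    rfl
  rw [Finset.sum_congr rfl hrw]
  rw [show (∑ i ∈ range (Nat.totient (p ^ N)), ∑ m1 ∈ range (k1+k2+1), ∑ m2 ∈ range (k1+k2+1),
        (-1 : ℤ) ^ (m1 + m2 + k1 + k2) * (Nat.factorial m1 : ℤ) * (Nat.factorial m2 : ℤ) *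
          ((m1 : ℤ) + 1) ^ (n1 + i) * ((m1 : ℤ) + (m2 : ℤ) + 2) ^ (n2 - 1) *
          ∑ n ∈ range (k1 + k2 + 1),
            (S2 n m1 : ℤ) * (S2 (k1 + k2 - n) m2 : ℤ) *
              (if k1 ≤ n then (Nat.choose k2 (n - k1) : ℤ) else 0))
      = ∑ m1 ∈ range (k1+k2+1), ∑ m2 ∈ range (k1+k2+1), ∑ i ∈ range (Nat.totient (p ^ N)),
        (-1 : ℤ) ^ (m1 + m2 + k1 + k2) * (Nat.factorial m1 : ℤ) * (Nat.factorial m2 : ℤ) *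
          ((m1 : ℤ) + 1) ^ (n1 + i) * ((m1 : ℤ) + (m2 : ℤ) + 2) ^ (n2 - 1) *
          ∑ n ∈ range (k1 + k2 + 1),
            (S2 n m1 : ℤ) * (S2 (k1 + k2 - n) m2 : ℤ) *
              (if k1 ≤ n then (Nat.choose k2 (n - k1) : ℤ) else 0)
    from Finset.sum_comm.trans (Finset.sum_congr rfl fun m1 _ => Finset.sum_comm)]
  apply Finset.dvd_sum; intro m1 _
  apply Finset.dvd_sum; intro m2 _
  cases m1 with
  | zero =>
    have hz : ∀ i ∈ range (Nat.totient (p ^ N)),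
        (-1 : ℤ) ^ (0 + m2 + k1 + k2) * (Nat.factorial 0 : ℤ) * (Nat.factorial m2 : ℤ) *
          (((0:ℕ) : ℤ) + 1) ^ (n1 + i) * (((0:ℕ) : ℤ) + (m2 : ℤ) + 2) ^ (n2 - 1) *
          ∑ n ∈ range (k1 + k2 + 1),
            (S2 n 0 : ℤ) * (S2 (k1 + k2 - n) m2 : ℤ) *
              (if k1 ≤ n then (Nat.choose k2 (n - k1) : ℤ) else 0) = 0 := by
      intro i _
      rw [W_zero k1 k2 hk1 m2]
      ring
    rw [Finset.sum_congr rfl hz]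
    simp
  | succ m =>
    have hfactor : (∑ i ∈ range (Nat.totient (p ^ N)),
        (-1 : ℤ) ^ ((m+1) + m2 + k1 + k2) * (Nat.factorial (m+1) : ℤ) * (Nat.factorial m2 : ℤ) *
          (((m+1 : ℕ) : ℤ) + 1) ^ (n1 + i) * (((m+1 : ℕ) : ℤ) + (m2 : ℤ) + 2) ^ (n2 - 1) *
          ∑ n ∈ range (k1 + k2 + 1),
            (S2 n (m+1) : ℤ) * (S2 (k1 + k2 - n) m2 : ℤ) *
              (if k1 ≤ n then (Nat.choose k2 (n - k1) : ℤ) else 0))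
        = ((-1 : ℤ) ^ ((m+1) + m2 + k1 + k2) * (Nat.factorial m2 : ℤ) *
            (((m+1 : ℕ) : ℤ) + (m2 : ℤ) + 2) ^ (n2 - 1) *
            ∑ n ∈ range (k1 + k2 + 1),
              (S2 n (m+1) : ℤ) * (S2 (k1 + k2 - n) m2 : ℤ) *
                (if k1 ≤ n then (Nat.choose k2 (n - k1) : ℤ) else 0))
          * ((Nat.factorial (m+1) : ℤ) * ∑ i ∈ range (Nat.totient (p ^ N)), (((m+1 : ℕ) : ℤ) + 1) ^ (n1 + i)) := by
      have h1 : (Nat.factorial (m+1) : ℤ) * ∑ i ∈ range (Nat.totient (p ^ N)), (((m+1 : ℕ) : ℤ) + 1) ^ (n1 + i)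
          = ∑ i ∈ range (Nat.totient (p ^ N)), (Nat.factorial (m+1) : ℤ) * (((m+1 : ℕ) : ℤ) + 1) ^ (n1 + i) :=
        Finset.mul_sum _ _ _
      rw [h1, Finset.mul_sum]
      apply sum_congr rfl; intro i _
      ring
    rw [hfactor]
    exact Dvd.dvd.mul_left (keyDvd p N hp (m+1) n1 (by omega) hn1) _
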